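/- Assume: 0 < F(x) ≤ c for all x > 0, limsup_{x→∞} F(x) < 1, liminf_{x→0⁺} F(x) > 1; there is a unique x̄ > 0 with F(x̄) = 1; 0 < α := inf_{x>0} F(x) < 1 < c := sup_{x>0} F(x) < ∞; F(x) ≤ 1 if and only if x ≥ x̄; there is L > 0 with |ln F(x)| ≤ L·|ln(x/x̄)| for all x ∈ (0, x̄·c^{m+1}); and (m + 3/2)·L < 3/2. Then every positive solution (A_n)_{n≥−m} of A_{n+1} = A_n·F(A_{n−m}) converges to x̄ as n → ∞. -/

import Mathlib

open Filter Finset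

private lemma gauss_sum (r : ℕ) : ∑ k ∈ Finset.range r, ((k:ℝ)+1) = r*(r+1)/2 := by
  induction r with
  | zero => simp
  | succ n ih => rw [Finset.sum_range_succ, ih]; push_cast; ring

private lemma phi_lt_one (m : ℕ) (L : ℝ) (hL : 0 < L) (hs : ((m:ℝ)+3/2)*L < 3/2) :
    L * ∑ k ∈ Finset.range (m+1), min 1 (((k:ℝ)+1)*L) < 1 := by
  have hL1 : L < 1 := by nlinarith [Nat.cast_nonneg (α := ℝ) m]
  rcases le_or_gt (((m:ℝ)+1)*L) 1 with h | h
  · -- all linear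
    have hsum : ∑ k ∈ Finset.range (m+1), min 1 (((k:ℝ)+1)*L)
        ≤ ∑ k ∈ Finset.range (m+1), ((k:ℝ)+1)*L := by
      apply Finset.sum_le_sum; intro k _; exact min_le_right _ _
    have hg : ∑ k ∈ Finset.range (m+1), ((k:ℝ)+1)*L = ((m:ℝ)+1)*((m:ℝ)+2)/2 * L := by
      rw [← Finset.sum_mul, gauss_sum]; push_cast; ring
    have hsumnn : (0:ℝ) ≤ ∑ k ∈ Finset.range (m+1), min 1 (((k:ℝ)+1)*L) := by
      apply Finset.sum_nonneg; intro k _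
      exact le_min (by norm_num) (by positivity)
    nlinarith [Nat.cast_nonneg (α := ℝ) m]
  · -- threshold case
    set ρ : ℕ := ⌊1/L⌋₊ with hρdef
    have h1L : (1:ℝ) ≤ 1/L := by rw [le_div_iff₀ hL]; linarith
    have hρle : (ρ:ℝ) * L ≤ 1 := by
      have := Nat.floor_le (by positivity : (0:ℝ) ≤ 1/L)
      calc (ρ:ℝ)*L ≤ (1/L)*L := by nlinarith
        _ = 1 := by field_simp
    have hρgt : 1 < ((ρ:ℝ)+1) * L := by
      have := Nat.lt_floor_add_one (1/L)
      have h2 : 1/L < (ρ:ℝ)+1 := by exact_mod_cast this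
      calc (1:ℝ) = (1/L)*L := by field_simp
        _ < ((ρ:ℝ)+1)*L := by nlinarith
    have hρm : ρ ≤ m := by
      by_contra hcon
      push_neg at hcon
      have : ((m:ℝ)+1) ≤ (ρ:ℝ) := by exact_mod_cast hcon
      nlinarith
    -- sum bound
    have hsum : ∑ k ∈ Finset.range (m+1), min 1 (((k:ℝ)+1)*L)
        ≤ ∑ k ∈ Finset.range (m+1), (if k < ρ then ((k:ℝ)+1)*L else 1) := by
      apply Finset.sum_le_sum; intro k _
      by_cases hk : k < ρ
      · rw [if_pos hk]; exact min_le_right _ _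
      · rw [if_neg hk]; exact min_le_left _ _
    have hsplit : ∑ k ∈ Finset.range (m+1), (if k < ρ then ((k:ℝ)+1)*L else 1)
        = (ρ:ℝ)*((ρ:ℝ)+1)/2 * L + ((m:ℝ)+1-(ρ:ℝ)) := by
      rw [Finset.range_eq_Ico, ← Finset.sum_Ico_consecutive _ (Nat.zero_le ρ) (by omega : ρ ≤ m+1)]
      have e1 : ∑ k ∈ Finset.Ico 0 ρ, (if k < ρ then ((k:ℝ)+1)*L else 1)
          = (ρ:ℝ)*((ρ:ℝ)+1)/2 * L := by
        rw [← Finset.range_eq_Ico]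
        rw [Finset.sum_congr rfl (fun k hk => if_pos (Finset.mem_range.mp hk))]
        rw [← Finset.sum_mul, gauss_sum]
      have e2 : ∑ k ∈ Finset.Ico ρ (m+1), (if k < ρ then ((k:ℝ)+1)*L else 1)
          = ((m:ℝ)+1-(ρ:ℝ)) := by
        rw [Finset.sum_congr rfl (fun k hk => if_neg (by
          have := (Finset.mem_Ico.mp hk).1; omega))]
        rw [Finset.sum_const, Nat.card_Ico]
        simp
        push_cast [Nat.cast_sub (by omega : ρ ≤ m+1)]
        ring
      rw [e1, e2]
    have key : (1 - L*ρ) * (1 - L*((ρ:ℝ)+1)) ≤ 0 :=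
      mul_nonpos_of_nonneg_of_nonpos (by nlinarith) (by nlinarith)
    have hfin : L * ((ρ:ℝ)*((ρ:ℝ)+1)/2 * L + ((m:ℝ)+1-(ρ:ℝ))) < 1 := by nlinarith
    calc L * ∑ k ∈ Finset.range (m+1), min 1 (((k:ℝ)+1)*L)
        ≤ L * ((ρ:ℝ)*((ρ:ℝ)+1)/2 * L + ((m:ℝ)+1-(ρ:ℝ))) := by
          rw [← hsplit]; exact mul_le_mul_of_nonneg_left (le_trans hsum (le_of_eq rfl)) hL.le
      _ < 1 := hfin

private lemma int_shift_tendsto (b : ℤ → ℝ) (N : ℤ) (ℓ : ℝ)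
    (h : Tendsto (fun k : ℕ => b (N + k)) atTop (nhds ℓ)) :
    Tendsto b atTop (nhds ℓ) := by
  have htn : Tendsto (fun n : ℤ => (n - N).toNat) atTop atTop := by
    apply tendsto_atTop_atTop.2
    intro B
    refine ⟨N + B, fun n hn => ?_⟩
    have h0 : (0:ℤ) ≤ n - N := by omega
    rw [Int.le_toNat h0]
    omega
  have hcomp := h.comp htn
  apply hcomp.congr'
  filter_upwards [eventually_ge_atTop N] with n hn
  simp only [Function.comp]
  congr 1
  rw [Int.toNat_of_nonneg (by omega : (0:ℤ) ≤ n - N)]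
  ring
private lemma int_tendsto_of_antitone (b : ℤ → ℝ) (N : ℤ) (c0 : ℝ)
    (hmono : ∀ n, N ≤ n → b (n+1) ≤ b n) (hlow : ∀ n, N ≤ n → c0 ≤ b n) :
    ∃ ℓ, c0 ≤ ℓ ∧ Tendsto b atTop (nhds ℓ) := by
  set f : ℕ → ℝ := fun k => b (N + k) with hf
  have hanti : Antitone f := by
    apply antitone_nat_of_succ_le
    intro k
    have : N + ((k:ℤ)+1) = (N + k) + 1 := by ring
    simpa [hf, this] using hmono (N + k) (by omega)
  have hbdd : BddBelow (Set.range f) := by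
    refine ⟨c0, ?_⟩
    rintro x ⟨k, rfl⟩
    exact hlow _ (by omega)
  have ht := tendsto_atTop_ciInf hanti hbdd
  refine ⟨⨅ k, f k, le_ciInf fun k => hlow _ (by omega), int_shift_tendsto b N _ ht⟩

private lemma int_tendsto_of_monotone (b : ℤ → ℝ) (N : ℤ) (c1 : ℝ)
    (hmono : ∀ n, N ≤ n → b n ≤ b (n+1)) (hup : ∀ n, N ≤ n → b n ≤ c1) :
    ∃ ℓ, ℓ ≤ c1 ∧ Tendsto b atTop (nhds ℓ) := by
  obtain ⟨ℓ, hℓ, ht⟩ := int_tendsto_of_antitone (fun n => -(b n)) N (-c1)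
    (fun n hn => neg_le_neg (hmono n hn)) (fun n hn => neg_le_neg (hup n hn))
  refine ⟨-ℓ, by linarith, ?_⟩
  have := ht.neg
  simpa using this

private lemma tel (m : ℕ) (b g : ℤ → ℝ)
    (hrec : ∀ n : ℤ, 0 ≤ n → b (n + 1) = b n + g (n - m)) :
    ∀ (a : ℤ), 0 ≤ a → ∀ k : ℕ, b (a + k) = b a + ∑ i ∈ Finset.range k, g (a + i - m) := by
  intro a ha k
  induction k with
  | zero => simp
  | succ j ih =>
    have h1 : a + ((j:ℤ)+1) = (a + j) + 1 := by ring
    have h2 := hrec (a + j) (by omega)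
    rw [Finset.sum_range_succ]
    have h3 : b (a + ((j:ℕ)+1:ℕ)) = b (a + j) + g (a + j - m) := by
      push_cast
      rw [h1]
      exact h2
    rw [h3, ih]
    ring

private lemma eps_limit (x y δ0 C : ℝ) (hδ : 0 < δ0) (hC : 0 ≤ C)
    (h : ∀ ε, 0 < ε → ε < δ0 → x ≤ y + ε * C) : x ≤ y := by
  by_contra hc
  push_neg at hc
  set ε := min (δ0/2) ((x - y)/(2*(C+1))) with hε
  have hε0 : 0 < ε := by
    apply lt_min (by linarith)
    apply div_pos (by linarith) (by linarith)
  have hεδ : ε < δ0 := lt_of_le_of_lt (min_le_left _ _) (by linarith)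
  have h2 : ε ≤ (x - y)/(2*(C+1)) := min_le_right _ _
  have h3 := h ε hε0 hεδ
  have h4 : ε * C ≤ (x - y)/(2*(C+1)) * C := by
    apply mul_le_mul_of_nonneg_right h2 hC
  have h5 : (x - y)/(2*(C+1)) * C < (x - y)/2 := by
    rw [div_mul_eq_mul_div, div_lt_div_iff₀ (by linarith) (by norm_num)]
    nlinarith
  linarith

private lemma upper_est (m : ℕ) (L W ε S : ℝ) (b g : ℤ → ℝ) (N : ℤ)
    (hL : 0 < L) (hW : 0 < W) (hε : 0 < ε) (hN : 0 ≤ N)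
    (hrec : ∀ n : ℤ, 0 ≤ n → b (n + 1) = b n + g (n - m))
    (hgle : ∀ n : ℤ, N ≤ n → g n ≤ L * W)
    (hgneg : ∀ n : ℤ, N ≤ n → ε < b n → g n ≤ 0)
    (hglip : ∀ n : ℤ, N ≤ n → g n ≤ L * max (-(b n)) 0)
    (hblow : ∀ n : ℤ, N ≤ n → -W ≤ b n)
    (hfreq1 : ∃ᶠ n in atTop, b n ≤ ε)
    (hfreq2 : ∃ᶠ n in atTop, S - ε ≤ b n)
    (hSε : ε < S - ε) :
    S - ε ≤ ε + L * W * ∑ k ∈ Finset.range (m+1), min 1 (((k:ℝ)+1) * L) := by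
  classical
  have tel := tel m b g hrec
  -- pick n1 with b n1 ≤ ε far out
  obtain ⟨n1, hn1ge, hn1⟩ : ∃ n1, N + 2*(m:ℤ) + 1 ≤ n1 ∧ b n1 ≤ ε := by
    obtain ⟨n1, h1, h2⟩ := (hfreq1.and_eventually (eventually_ge_atTop (N + 2*(m:ℤ) + 1))).exists
    exact ⟨n1, h2, h1⟩
  -- pick n ≥ n1 with b (n+1) ≥ S - ε
  obtain ⟨n, hn_ge, hbn1⟩ : ∃ n, n1 ≤ n ∧ S - ε ≤ b (n+1) := by
    obtain ⟨P, h1, h2⟩ := (hfreq2.and_eventually (eventually_ge_atTop (n1 + 1))).exists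
    refine ⟨P - 1, by omega, by simpa using h1⟩
  -- last crossing point t0
  set P0 : ℕ → Prop := fun j => b (n1 + j) ≤ ε with hP0def
  set d : ℕ := (n - n1).toNat with hd
  set j0 : ℕ := Nat.findGreatest P0 d with hj0
  set t0 : ℤ := n1 + j0 with ht0def
  have hd_eq : (d:ℤ) = n - n1 := Int.toNat_of_nonneg (by omega)
  have hP00 : P0 0 := by simpa [hP0def] using hn1
  have ht0ε : b t0 ≤ ε := Nat.findGreatest_spec (Nat.zero_le d) hP00
  have hj0d : j0 ≤ d := Nat.findGreatest_le d
  have ht0n : t0 ≤ n := by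
    have : (j0:ℤ) ≤ d := by exact_mod_cast hj0d
    omega
  have ht0ge : N + 2*(m:ℤ) + 1 ≤ t0 := by
    have : (0:ℤ) ≤ (j0:ℤ) := Int.ofNat_nonneg j0
    omega
  have hafter : ∀ j : ℤ, t0 < j → j ≤ n + 1 → ε < b j := by
    intro j hj1 hj2
    rcases eq_or_lt_of_le hj2 with rfl | hj3
    · linarith
    · have hjn : j ≤ n := by omega
      set k : ℕ := (j - n1).toNat with hk
      have hk_eq : (k:ℤ) = j - n1 := Int.toNat_of_nonneg (by omega)
      have hkj0 : j0 < k := by omega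
      have hkd : k ≤ d := by omega
      have := Nat.findGreatest_is_greatest (P := P0) (hj0 ▸ hkj0) hkd
      rw [hP0def] at this
      simp only [not_le] at this
      have hjk : n1 + (k:ℤ) = j := by omega
      rwa [hjk] at this
  -- lower bound on b t0
  have hbt0low : ε - L*W < b t0 := by
    have h1 := hrec t0 (by omega)
    have h2 : ε < b (t0 + 1) := hafter (t0+1) (by omega) (by omega)
    have h3 : g (t0 - m) ≤ L*W := hgle _ (by omega)
    linarith [h1 ▸ h2]
  -- backward bounds
  have hback : ∀ j : ℕ, j ≤ m → -(b (t0 - j)) ≤ ((j:ℝ)+1) * (L * W) := by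
    intro j hj
    have htel := tel (t0 - j) (by omega) j
    have hsum : ∑ i ∈ Finset.range j, g (t0 - j + i - m) ≤ (j:ℝ) * (L*W) := by
      calc ∑ i ∈ Finset.range j, g (t0 - j + i - m)
          ≤ ∑ _i ∈ Finset.range j, L*W := by
            apply Finset.sum_le_sum
            intro i hi
            apply hgle
            have : (0:ℤ) ≤ (i:ℤ) := Int.ofNat_nonneg i
            omega
        _ = (j:ℝ) * (L*W) := by rw [Finset.sum_const, Finset.card_range]; simp [nsmul_eq_mul]
    have heq : t0 - (j:ℤ) + (j:ℤ) = t0 := by ring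
    rw [heq] at htel
    nlinarith [hbt0low, hε]
  -- main estimate
  set Φs : ℝ := ∑ k ∈ Finset.range (m+1), min 1 (((k:ℝ)+1) * L) with hΦs
  set k1 : ℕ := min ((n + 1 - t0).toNat) (m + 1) with hk1
  set t1 : ℤ := t0 + (k1:ℤ) with ht1
  have hterm : ∀ i : ℕ, i < m + 1 → g (t0 + i - m) ≤ L * W * min 1 ((((m - i : ℕ):ℝ)+1) * L) := by
    intro i hi
    set j : ℕ := m - i with hjdef
    have hij : (i:ℤ) - (m:ℤ) = -(j:ℤ) := by
      have : j = m - i := rfl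
      omega
    have hidx : t0 + i - m = t0 - j := by omega
    have h1 : g (t0 - j) ≤ L * max (-(b (t0 - j))) 0 := hglip _ (by omega)
    have h2 : -(b (t0 - j)) ≤ ((j:ℝ)+1) * (L * W) := hback j (by omega)
    have h3 : -(b (t0 - j)) ≤ W := by
      have := hblow (t0 - j) (by omega)
      linarith
    have h4 : max (-(b (t0 - j))) 0 ≤ W * min 1 (((j:ℝ)+1) * L) := by
      rcases le_total (1:ℝ) (((j:ℝ)+1) * L) with hc | hc
      · rw [min_eq_left hc, mul_one]
        exact max_le h3 hW.le
      · rw [min_eq_right hc]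
        apply max_le
        · nlinarith
        · positivity
    calc g (t0 + i - m) = g (t0 - j) := by rw [hidx]
      _ ≤ L * max (-(b (t0 - j))) 0 := h1
      _ ≤ L * (W * min 1 (((j:ℝ)+1) * L)) := mul_le_mul_of_nonneg_left h4 hL.le
      _ = L * W * min 1 ((((m - i:ℕ):ℝ)+1) * L) := by rw [← hjdef]; ring
  have hbound_nonneg : ∀ i : ℕ, 0 ≤ L * W * min 1 ((((m - i:ℕ):ℝ)+1) * L) := by
    intro i
    have : (0:ℝ) ≤ min 1 ((((m - i:ℕ):ℝ)+1) * L) := le_min (by norm_num) (by positivity)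
    positivity
  have hreflect : ∑ i ∈ Finset.range (m+1), (L * W * min 1 ((((m - i:ℕ):ℝ)+1) * L))
      = L * W * Φs := by
    have := Finset.sum_range_reflect (fun k => L * W * min 1 (((k:ℝ)+1) * L)) (m+1)
    simp only [Nat.add_sub_cancel] at this
    rw [this, hΦs, Finset.mul_sum]
  have hstep1 : b t1 ≤ ε + L * W * Φs := by
    have htel := tel t0 (by omega) k1
    rw [← ht1] at htel
    have hk1le : k1 ≤ m + 1 := min_le_right _ _
    have hsum1 : ∑ i ∈ Finset.range k1, g (t0 + i - m)
        ≤ ∑ i ∈ Finset.range (m+1), (L * W * min 1 ((((m - i:ℕ):ℝ)+1) * L)) := by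
      calc ∑ i ∈ Finset.range k1, g (t0 + i - m)
          ≤ ∑ i ∈ Finset.range k1, (L * W * min 1 ((((m - i:ℕ):ℝ)+1) * L)) := by
            apply Finset.sum_le_sum
            intro i hi
            have hik : i < k1 := Finset.mem_range.mp hi
            exact hterm i (by omega)
        _ ≤ ∑ i ∈ Finset.range (m+1), (L * W * min 1 ((((m - i:ℕ):ℝ)+1) * L)) := by
            apply Finset.sum_le_sum_of_subset_of_nonneg (Finset.range_subset_range.mpr hk1le)
            intro i _ _
            exact hbound_nonneg i
    rw [← hreflect]
    linarith [htel, ht0ε]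
  have hstep2 : b (n+1) ≤ b t1 := by
    rcases le_or_gt ((n + 1 - t0).toNat) (m+1) with hcase | hcase
    · have : k1 = (n + 1 - t0).toNat := by rw [hk1]; omega
      have ht1eq : t1 = n + 1 := by
        rw [ht1, this, Int.toNat_of_nonneg (by omega : (0:ℤ) ≤ n + 1 - t0)]
        ring
      rw [ht1eq]
    · have hk1m : k1 = m + 1 := by rw [hk1]; omega
      have ht1eq : t1 = t0 + (m:ℤ) + 1 := by rw [ht1, hk1m]; push_cast; ring
      have ht1n : t1 ≤ n + 1 := by
        have : ((m:ℕ)+1 : ℤ) < n + 1 - t0 := by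
          have h0 : (0:ℤ) ≤ n + 1 - t0 := by omega
          have := (Int.toNat_of_nonneg h0)
          omega
        omega
      set k2 : ℕ := (n + 1 - t1).toNat with hk2
      have hk2eq : (k2:ℤ) = n + 1 - t1 := Int.toNat_of_nonneg (by omega)
      have htel2 := tel t1 (by omega) k2
      have ht1k2 : t1 + (k2:ℤ) = n + 1 := by omega
      rw [ht1k2] at htel2
      have hsum2 : ∑ i ∈ Finset.range k2, g (t1 + i - m) ≤ 0 := by
        apply Finset.sum_nonpos
        intro i hi
        have hi' : (i:ℤ) < k2 := by exact_mod_cast Finset.mem_range.mp hi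
        apply hgneg _ (by omega)
        apply hafter
        · omega
        · omega
      linarith
  calc S - ε ≤ b (n+1) := hbn1
    _ ≤ b t1 := hstep2
    _ ≤ ε + L * W * Φs := hstep1

set_option maxHeartbeats 2000000 in
private lemma core (m : ℕ) (b g : ℤ → ℝ) (K G L : ℝ)
    (hK : 0 < K) (hG : 0 < G) (hL : 0 < L)
    (hrec : ∀ n : ℤ, 0 ≤ n → b (n + 1) = b n + g (n - m))
    (hgK : ∀ n : ℤ, -(m:ℤ) ≤ n → g n ≤ K)
    (hgG : ∀ n : ℤ, -(m:ℤ) ≤ n → -G ≤ g n)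
    (hsign1 : ∀ n : ℤ, -(m:ℤ) ≤ n → (g n ≤ 0 ↔ 0 ≤ b n))
    (hsign2 : ∀ n : ℤ, -(m:ℤ) ≤ n → (0 ≤ g n ↔ b n ≤ 0))
    (hlip : ∀ n : ℤ, -(m:ℤ) ≤ n → b n < ((m:ℝ)+1)*K → |g n| ≤ L * |b n|)
    (hlim : ∀ ℓ : ℝ, Tendsto b atTop (nhds ℓ) → ℓ = 0)
    (hsmall : ((m:ℝ)+3/2) * L < 3/2) :
    Tendsto b atTop (nhds 0) := by
  have tel := tel m b g hrec
  set Kb : ℝ := ((m:ℝ)+1)*K with hKbdef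
  set Gb : ℝ := ((m:ℝ)+1)*G with hGbdef
  have hmpos : (0:ℝ) ≤ (m:ℝ) := Nat.cast_nonneg m
  have hKb : 0 < Kb := by positivity
  have hGb : 0 < Gb := by positivity
  -- constant sum bound
  have hsumK : ∀ n : ℤ, (m:ℤ) ≤ n → ∑ i ∈ Finset.range (m+1), g (n - m + i - m) ≤ Kb := by
    intro n hn
    calc ∑ i ∈ Finset.range (m+1), g (n - m + i - m)
        ≤ ∑ _i ∈ Finset.range (m+1), K := by
          apply Finset.sum_le_sum
          intro i _
          apply hgK
          have : (0:ℤ) ≤ (i:ℤ) := Int.ofNat_nonneg i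
          omega
      _ = Kb := by rw [Finset.sum_const, Finset.card_range, nsmul_eq_mul]; push_cast; ring
  have hsumG : ∀ n : ℤ, (m:ℤ) ≤ n → -Gb ≤ ∑ i ∈ Finset.range (m+1), g (n - m + i - m) := by
    intro n hn
    calc -Gb = ∑ _i ∈ Finset.range (m+1), (-G) := by
          rw [Finset.sum_const, Finset.card_range, nsmul_eq_mul]; push_cast; ring
      _ ≤ ∑ i ∈ Finset.range (m+1), g (n - m + i - m) := by
          apply Finset.sum_le_sum
          intro i _
          apply hgG
          have : (0:ℤ) ≤ (i:ℤ) := Int.ofNat_nonneg i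
          omega
  have htel1 : ∀ n : ℤ, (m:ℤ) ≤ n →
      b (n + 1) = b (n - m) + ∑ i ∈ Finset.range (m+1), g (n - m + i - m) := by
    intro n hn
    have h := tel (n - m) (by omega) (m+1)
    have heq : n - (m:ℤ) + ((m+1:ℕ):ℤ) = n + 1 := by push_cast; ring
    rwa [heq] at h
  -- A1
  have A1 : ∀ n : ℤ, (m:ℤ) ≤ n → Kb ≤ b (n+1) → b (n+1) ≤ b n := by
    intro n hn hge
    by_contra hcon
    push_neg at hcon
    have hgpos : 0 < g (n - m) := by
      have := hrec n (by omega)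
      linarith
    have hbneg : b (n - m) < 0 := by
      by_contra hb
      push_neg at hb
      have := (hsign1 (n - m) (by omega)).mpr hb
      linarith
    have := htel1 n hn
    have := hsumK n hn
    linarith
  -- B1
  have B1 : ∀ n : ℤ, (m:ℤ) ≤ n → b (n+1) ≤ -Gb → b n ≤ b (n+1) := by
    intro n hn hge
    by_contra hcon
    push_neg at hcon
    have hgneg : g (n - m) < 0 := by
      have := hrec n (by omega)
      linarith
    have hbpos : 0 < b (n - m) := by
      by_contra hb
      push_neg at hb
      have := (hsign2 (n - m) (by omega)).mpr hb
      linarith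
    have := htel1 n hn
    have := hsumG n hn
    linarith
  -- A3 : eventual upper bound
  have A3 : ∃ N1 : ℤ, (m:ℤ) ≤ N1 ∧ ∀ n, N1 ≤ n → b n < Kb := by
    have hex : ∃ n0 : ℤ, (m:ℤ) ≤ n0 ∧ b n0 < Kb := by
      by_contra hcon
      push_neg at hcon
      obtain ⟨ℓ, hℓ1, hℓ2⟩ := int_tendsto_of_antitone b m Kb
        (fun n hn => A1 n hn (hcon (n+1) (by omega)))
        (fun n hn => hcon n hn)
      have := hlim ℓ hℓ2
      linarith
    obtain ⟨n0, hn0m, hn0⟩ := hex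
    refine ⟨n0, hn0m, ?_⟩
    refine Int.le_induction (motive := fun n _ => b n < Kb) hn0 ?_
    intro k hk ih
    by_contra hcon
    push_neg at hcon
    have := A1 k (by omega) hcon
    linarith
  obtain ⟨N1, hN1m, hN1⟩ := A3
  -- B3 : eventual lower bound
  have B3 : ∃ N2 : ℤ, N1 ≤ N2 ∧ ∀ n, N2 ≤ n → -Gb < b n := by
    have hex : ∃ n0 : ℤ, N1 ≤ n0 ∧ -Gb < b n0 := by
      by_contra hcon
      push_neg at hcon
      obtain ⟨ℓ, hℓ1, hℓ2⟩ := int_tendsto_of_monotone b N1 (-Gb)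
        (fun n hn => B1 n (by omega) (hcon (n+1) (by omega)))
        (fun n hn => hcon n hn)
      have := hlim ℓ hℓ2
      linarith
    obtain ⟨n0, hn0m, hn0⟩ := hex
    refine ⟨n0, hn0m, ?_⟩
    refine Int.le_induction (motive := fun n _ => -Gb < b n) hn0 ?_
    intro k hk ih
    by_contra hcon
    push_neg at hcon
    have := B1 k (by omega) hcon
    linarith
  obtain ⟨N2, hN2m, hN2⟩ := B3
  have htail : ∀ n : ℤ, N2 ≤ n → -Gb < b n ∧ b n < Kb :=
    fun n hn => ⟨hN2 n hn, hN1 n (by omega)⟩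
  -- boundedness
  have hbddU : IsBoundedUnder (· ≤ ·) atTop b :=
    ⟨Kb, eventually_map.mpr (by
      filter_upwards [eventually_ge_atTop N2] with n hn
      exact (htail n hn).2.le)⟩
  have hbddL : IsBoundedUnder (· ≥ ·) atTop b :=
    ⟨-Gb, eventually_map.mpr (by
      filter_upwards [eventually_ge_atTop N2] with n hn
      exact (htail n hn).1.le)⟩
  set S := limsup b atTop with hSdef
  set I := liminf b atTop with hIdef
  have hIS : I ≤ S := liminf_le_limsup hbddU hbddL
  rcases eq_or_lt_of_le hIS with heq | hlt
  · have h2 : limsup b atTop = S := rfl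
    have h1 : liminf b atTop = S := heq
    have ht := tendsto_of_liminf_eq_limsup h1 h2 hbddU hbddL
    have hS0 := hlim S ht
    rwa [hS0] at ht
  · exfalso
    -- S ≥ 0
    have hS0 : 0 ≤ S := by
      by_contra hS
      push_neg at hS
      have hev : ∀ᶠ n in atTop, b n < S/2 :=
        eventually_lt_of_limsup_lt (by rw [← hSdef]; linarith) hbddU
      obtain ⟨N4, hN4⟩ := eventually_atTop.mp hev
      set M : ℤ := max (N4 + (m:ℤ)) (max (m:ℤ) N2) with hM
      have hmono : ∀ n, M ≤ n → b n ≤ b (n+1) := by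
        intro n hn
        have hb : b (n - m) < S/2 := hN4 _ (by omega)
        have hg : 0 < g (n - m) := by
          by_contra hgc
          push_neg at hgc
          have := (hsign1 (n - m) (by omega)).mp hgc
          linarith
        have := hrec n (by omega)
        linarith
      obtain ⟨ℓ, _, hℓ2⟩ := int_tendsto_of_monotone b M Kb hmono
        (fun n hn => (hN1 n (by omega)).le)
      have hz := hlim ℓ hℓ2
      have : ℓ ≤ S/2 := le_of_tendsto hℓ2 (by
        filter_upwards [eventually_ge_atTop N4] with n hn
        exact (hN4 n hn).le)
      linarith
    -- I ≤ 0
    have hI0 : I ≤ 0 := by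
      by_contra hI
      push_neg at hI
      have hev : ∀ᶠ n in atTop, I/2 < b n :=
        eventually_lt_of_lt_liminf (by rw [← hIdef]; linarith) hbddL
      obtain ⟨N4, hN4⟩ := eventually_atTop.mp hev
      set M : ℤ := max (N4 + (m:ℤ)) (max (m:ℤ) N2) with hM
      have hmono : ∀ n, M ≤ n → b (n+1) ≤ b n := by
        intro n hn
        have hb : I/2 < b (n - m) := hN4 _ (by omega)
        have hg : g (n - m) ≤ 0 := (hsign1 (n - m) (by omega)).mpr (by linarith)
        have := hrec n (by omega)
        linarith
      obtain ⟨ℓ, _, hℓ2⟩ := int_tendsto_of_antitone b M (-Gb) hmono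
        (fun n hn => (hN2 n (by omega)).le)
      have hz := hlim ℓ hℓ2
      have : I/2 ≤ ℓ := ge_of_tendsto hℓ2 (by
        filter_upwards [eventually_ge_atTop N4] with n hn
        exact (hN4 n hn).le)
      linarith
    set Φ : ℝ := L * ∑ k ∈ Finset.range (m+1), min 1 (((k:ℝ)+1)*L) with hΦdef
    have hΦ1 : Φ < 1 := phi_lt_one m L hL hsmall
    have hΦ0 : 0 ≤ Φ := by
      apply mul_nonneg hL.le
      apply Finset.sum_nonneg
      intro k _
      exact le_min (by norm_num) (by positivity)
    -- claim 1
    have claim1 : 0 < S → S ≤ Φ * (-I) := by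
      intro hSpos
      apply eps_limit S (Φ * (-I)) (S/2) (2 + Φ) (by linarith) (by linarith)
      intro ε hε0 hεδ
      set W : ℝ := -I + ε with hWdef
      have hWpos : 0 < W := by
        have : 0 ≤ -I := by linarith
        rw [hWdef]; linarith
      have hev1 : ∀ᶠ n in atTop, I - ε < b n :=
        eventually_lt_of_lt_liminf (by rw [← hIdef]; linarith) hbddL
      obtain ⟨N5, hN5⟩ := eventually_atTop.mp (hev1.and (eventually_ge_atTop (max N2 0)))
      set N : ℤ := max N5 (max N2 0) with hN
      have hNfacts : ∀ n : ℤ, N ≤ n → I - ε < b n ∧ N2 ≤ n ∧ 0 ≤ n := by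
        intro n hn
        have h := hN5 n (by omega)
        exact ⟨h.1, by omega, by omega⟩
      have key := upper_est m L W ε S b g N hL hWpos hε0 (by omega) hrec
        (by -- hgle
          intro n hn
          obtain ⟨hb1, hb2, hb3⟩ := hNfacts n hn
          rcases le_or_gt 0 (b n) with hbn | hbn
          · have := (hsign1 n (by omega)).mpr hbn
            nlinarith
          · have habs := hlip n (by omega) (by linarith [(htail n hb2).2])
            rw [abs_of_neg hbn] at habs
            have hgle' : g n ≤ |g n| := le_abs_self _
            have : -(b n) < W := by rw [hWdef]; linarith
            nlinarith [abs_nonneg (g n)])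
        (by -- hgneg
          intro n hn hbn
          obtain ⟨hb1, hb2, hb3⟩ := hNfacts n hn
          exact (hsign1 n (by omega)).mpr (by linarith))
        (by -- hglip
          intro n hn
          obtain ⟨hb1, hb2, hb3⟩ := hNfacts n hn
          rcases le_or_gt 0 (b n) with hbn | hbn
          · have := (hsign1 n (by omega)).mpr hbn
            have : (0:ℝ) ≤ L * max (-(b n)) 0 := mul_nonneg hL.le (le_max_right _ _)
            linarith [(hsign1 n (by omega)).mpr hbn]
          · have habs := hlip n (by omega) (by linarith [(htail n hb2).2])
            rw [abs_of_neg hbn] at habs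
            have hmax : max (-(b n)) 0 = -(b n) := max_eq_left (by linarith)
            rw [hmax]
            linarith [le_abs_self (g n)])
        (by -- hblow
          intro n hn
          have := (hNfacts n hn).1
          rw [hWdef]
          linarith)
        (by -- hfreq1
          have hfr := frequently_lt_of_liminf_lt (hbddU.isCoboundedUnder_ge)
            (show liminf b atTop < ε by rw [← hIdef]; linarith)
          exact hfr.mono fun n h => h.le)
        (by -- hfreq2
          have hfr := frequently_lt_of_lt_limsup (hbddL.isCoboundedUnder_le)
            (show S - ε < limsup b atTop by rw [← hSdef]; linarith)
          exact hfr.mono fun n h => h.le)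
        (by linarith)
      have hΦW : L * W * ∑ k ∈ Finset.range (m+1), min 1 (((k:ℝ)+1) * L) = Φ * W := by
        rw [hΦdef]; ring
      rw [hΦW] at key
      rw [hWdef] at key
      nlinarith
    -- claim 2
    have claim2 : I < 0 → -I ≤ Φ * S := by
      intro hIneg
      apply eps_limit (-I) (Φ * S) (-I/2) (2 + Φ) (by linarith) (by linarith)
      intro ε hε0 hεδ
      set W : ℝ := S + ε with hWdef
      have hWpos : 0 < W := by rw [hWdef]; linarith
      have hev1 : ∀ᶠ n in atTop, b n < S + ε :=
        eventually_lt_of_limsup_lt (by rw [← hSdef]; linarith) hbddU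
      obtain ⟨N5, hN5⟩ := eventually_atTop.mp (hev1.and (eventually_ge_atTop (max N2 0)))
      set N : ℤ := max N5 (max N2 0) with hN
      have hNfacts : ∀ n : ℤ, N ≤ n → b n < S + ε ∧ N2 ≤ n ∧ 0 ≤ n := by
        intro n hn
        have h := hN5 n (by omega)
        exact ⟨h.1, by omega, by omega⟩
      have key := upper_est m L W ε (-I) (fun n => -(b n)) (fun n => -(g n)) N
        hL hWpos hε0 (by omega)
        (by intro n hn; have := hrec n hn; try beta_reduce; linarith)
        (by -- hgle
          intro n hn
          obtain ⟨hb1, hb2, hb3⟩ := hNfacts n hn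
          try beta_reduce
          rcases le_or_gt (b n) 0 with hbn | hbn
          · have := (hsign2 n (by omega)).mpr hbn
            nlinarith
          · have habs := hlip n (by omega) (by linarith [(htail n hb2).2])
            rw [abs_of_pos hbn] at habs
            have : b n < W := by rw [hWdef]; linarith
            nlinarith [neg_abs_le (g n)])
        (by -- hgneg
          intro n hn hbn
          obtain ⟨hb1, hb2, hb3⟩ := hNfacts n hn
          try beta_reduce at hbn ⊢
          have := (hsign2 n (by omega)).mpr (by linarith)
          linarith)
        (by -- hglip
          intro n hn
          obtain ⟨hb1, hb2, hb3⟩ := hNfacts n hn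
          try beta_reduce
          rw [neg_neg]
          rcases le_or_gt (b n) 0 with hbn | hbn
          · have := (hsign2 n (by omega)).mpr hbn
            have : (0:ℝ) ≤ L * max (b n) 0 := mul_nonneg hL.le (le_max_right _ _)
            linarith [(hsign2 n (by omega)).mpr hbn]
          · have habs := hlip n (by omega) (by linarith [(htail n hb2).2])
            rw [abs_of_pos hbn] at habs
            have hmax : max (b n) 0 = b n := max_eq_left hbn.le
            rw [hmax]
            linarith [neg_abs_le (g n)])
        (by -- hblow
          intro n hn
          have := (hNfacts n hn).1
          try beta_reduce
          rw [hWdef]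
          linarith)
        (by -- hfreq1 : frequently -(b n) ≤ ε, i.e. -ε ≤ b n
          have hfr := frequently_lt_of_lt_limsup (hbddL.isCoboundedUnder_le)
            (show -ε < limsup b atTop by rw [← hSdef]; linarith)
          exact hfr.mono fun n h => by try beta_reduce; linarith)
        (by -- hfreq2 : frequently -I - ε ≤ -(b n), i.e. b n ≤ I + ε
          have hfr := frequently_lt_of_liminf_lt (hbddU.isCoboundedUnder_ge)
            (show liminf b atTop < I + ε by rw [← hIdef]; linarith)
          exact hfr.mono fun n h => by try beta_reduce; linarith)
        (by linarith)
      have hΦW : L * W * ∑ k ∈ Finset.range (m+1), min 1 (((k:ℝ)+1) * L) = Φ * W := by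
        rw [hΦdef]; ring
      rw [hΦW, hWdef] at key
      nlinarith
    -- finish
    rcases eq_or_lt_of_le hS0 with hSz | hSpos
    · have hIneg : I < 0 := by rw [← hSz] at hlt; exact hlt
      have := claim2 hIneg
      rw [← hSz] at this
      nlinarith
    · have hc1 := claim1 hSpos
      have hIneg : I < 0 := by
        rcases eq_or_lt_of_le hI0 with hIz | h
        · exfalso; rw [hIz] at hc1; nlinarith
        · exact h
      have hc2 := claim2 hIneg
      nlinarith


/-- 3/2-stability: under the standing hypotheses, a log-Lipschitz condition on `F`
with constant `L` on `(0, x̄ c^{m+1})`, and `(m + 3/2) L < 3/2`, every positive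
solution of `A_{n+1} = A_n F(A_{n-m})` converges to the equilibrium `x̄`. -/
theorem stmt_6 (m : ℕ) (F : ℝ → ℝ) (c α xbar L : ℝ)
    (hFc : ∀ x : ℝ, 0 < x → 0 < F x ∧ F x ≤ c)
    (hcont : ContinuousOn F (Set.Ioi (0 : ℝ)))
    (hsup : Filter.limsup F Filter.atTop < 1)
    (hinf : 1 < Filter.liminf F (nhdsWithin 0 (Set.Ioi (0 : ℝ))))
    (hxbar : 0 < xbar ∧ F xbar = 1 ∧ ∀ y : ℝ, 0 < y → F y = 1 → y = xbar)
    (hα : α = sInf (F '' Set.Ioi 0))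
    (hc : c = sSup (F '' Set.Ioi 0))
    (hbounds : 0 < α ∧ α < 1 ∧ 1 < c)
    (hmono : ∀ x : ℝ, 0 < x → (F x ≤ 1 ↔ xbar ≤ x))
    (hL : 0 < L)
    (hLip : ∀ x : ℝ, 0 < x → x < xbar * c ^ (m + 1) →
      |Real.log (F x)| ≤ L * |Real.log (x / xbar)|)
    (hsmall : ((m : ℝ) + 3 / 2) * L < 3 / 2)
    (A : ℤ → ℝ)
    (hApos : ∀ n : ℤ, -(m : ℤ) ≤ n → 0 < A n)
    (hArec : ∀ n : ℤ, 0 ≤ n → A (n + 1) = A n * F (A (n - m))) :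
    Filter.Tendsto A Filter.atTop (nhds xbar) := by
  obtain ⟨hxb, hFxbar, huniq⟩ := hxbar
  obtain ⟨hα0, hα1, hc1⟩ := hbounds
  set K : ℝ := Real.log c with hKdef
  set G : ℝ := -Real.log α with hGdef
  have hKpos : 0 < K := Real.log_pos hc1
  have hGpos : 0 < G := by
    have := Real.log_neg hα0 hα1
    rw [hGdef]; linarith
  set b : ℤ → ℝ := fun n => Real.log (A n / xbar) with hbdef
  set g : ℤ → ℝ := fun n => Real.log (F (A n)) with hgdef
  have hFpos : ∀ n : ℤ, -(m:ℤ) ≤ n → 0 < F (A n) := fun n hn => (hFc (A n) (hApos n hn)).1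
  -- recurrence
  have hrec : ∀ n : ℤ, 0 ≤ n → b (n + 1) = b n + g (n - m) := by
    intro n hn
    have hAn : 0 < A n := hApos n (by omega)
    have hAnm : 0 < A (n - m) := hApos (n - m) (by omega)
    have hF : 0 < F (A (n - m)) := (hFc _ hAnm).1
    rw [hbdef, hgdef]
    dsimp only
    rw [hArec n hn]
    rw [show A n * F (A (n - m)) / xbar = (A n / xbar) * F (A (n - m)) by ring]
    rw [Real.log_mul (by positivity) (by positivity)]
  -- bounds on g
  have hgK : ∀ n : ℤ, -(m:ℤ) ≤ n → g n ≤ K := by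
    intro n hn
    exact Real.log_le_log (hFpos n hn) (hFc (A n) (hApos n hn)).2
  have hbddBelow : BddBelow (F '' Set.Ioi 0) := by
    refine ⟨0, ?_⟩
    rintro y ⟨x, hx, rfl⟩
    exact (hFc x hx).1.le
  have hgG : ∀ n : ℤ, -(m:ℤ) ≤ n → -G ≤ g n := by
    intro n hn
    have hαle : α ≤ F (A n) := by
      rw [hα]
      exact csInf_le hbddBelow ⟨A n, hApos n hn, rfl⟩
    rw [hGdef, neg_neg]
    exact Real.log_le_log hα0 hαle
  -- sign conditions
  have hsign1 : ∀ n : ℤ, -(m:ℤ) ≤ n → (g n ≤ 0 ↔ 0 ≤ b n) := by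
    intro n hn
    have hAn : 0 < A n := hApos n hn
    rw [hgdef, hbdef]
    dsimp only
    rw [Real.log_nonpos_iff (hFpos n hn).le, Real.log_nonneg_iff (by positivity), one_le_div hxb]
    exact hmono (A n) hAn
  have hF1iff : ∀ n : ℤ, -(m:ℤ) ≤ n → (1 ≤ F (A n) ↔ A n ≤ xbar) := by
    intro n hn
    have hAn : 0 < A n := hApos n hn
    constructor
    · intro h1
      by_contra hcon
      push_neg at hcon
      have hle : F (A n) ≤ 1 := (hmono (A n) hAn).mpr hcon.le
      have heq : F (A n) = 1 := le_antisymm hle h1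
      have := huniq (A n) hAn heq
      linarith
    · intro h1
      rcases eq_or_lt_of_le h1 with heq | hlt
      · rw [heq, hFxbar]
      · by_contra hcon
        push_neg at hcon
        have := (hmono (A n) hAn).mp hcon.le
        linarith
  have hsign2 : ∀ n : ℤ, -(m:ℤ) ≤ n → (0 ≤ g n ↔ b n ≤ 0) := by
    intro n hn
    have hAn : 0 < A n := hApos n hn
    rw [hgdef, hbdef]
    dsimp only
    rw [Real.log_nonneg_iff (hFpos n hn), Real.log_nonpos_iff (by positivity), div_le_one hxb]
    exact hF1iff n hn
  -- Lipschitz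
  have hlip : ∀ n : ℤ, -(m:ℤ) ≤ n → b n < ((m:ℝ)+1)*K → |g n| ≤ L * |b n| := by
    intro n hn hb
    have hAn : 0 < A n := hApos n hn
    have hcp : (0:ℝ) < c ^ (m+1) := pow_pos (by linarith) _
    have hlog : Real.log (A n / xbar) < Real.log (c ^ (m+1)) := by
      rw [Real.log_pow]
      push_cast
      exact hb
    have hdiv : A n / xbar < c ^ (m+1) := (Real.log_lt_log_iff (by positivity) hcp).mp hlog
    have hAnlt : A n < xbar * c ^ (m+1) := by
      rw [div_lt_iff₀ hxb] at hdiv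
      linarith [hdiv]
    exact hLip (A n) hAn hAnlt
  -- limit identification
  have hAeq : ∀ᶠ n in atTop, A n = xbar * Real.exp (b n) := by
    filter_upwards [eventually_ge_atTop (-(m:ℤ))] with n hn
    rw [hbdef]
    dsimp only
    rw [Real.exp_log (div_pos (hApos n hn) hxb)]
    field_simp
  have hshift : ∀ j : ℤ, Tendsto (fun k : ℤ => k + j) atTop atTop := by
    intro j
    apply tendsto_atTop_atTop.2
    intro B
    exact ⟨B - j, fun n hn => by omega⟩
  have hlim : ∀ ℓ : ℝ, Tendsto b atTop (nhds ℓ) → ℓ = 0 := by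
    intro ℓ ht
    have hA : Tendsto A atTop (nhds (xbar * Real.exp ℓ)) := by
      have h1 : Tendsto (fun n : ℤ => xbar * Real.exp (b n)) atTop (nhds (xbar * Real.exp ℓ)) :=
        (Real.continuous_exp.continuousAt.tendsto.comp ht).const_mul xbar
      exact h1.congr' (hAeq.mono fun n h => h.symm)
    set p : ℝ := xbar * Real.exp ℓ with hpdef
    have hp : 0 < p := by positivity
    have hFA : Tendsto (fun n : ℤ => F (A n)) atTop (nhds (F p)) :=
      (hcont.continuousAt (isOpen_Ioi.mem_nhds hp)).tendsto.comp hA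
    have hgF : Tendsto g atTop (nhds (Real.log (F p))) :=
      ((Real.continuousAt_log (ne_of_gt (hFc p hp).1)).tendsto).comp hFA
    have hg0 : Tendsto g atTop (nhds 0) := by
      have h1 : Tendsto (fun k : ℤ => b (k + ((m:ℤ) + 1)) - b (k + m)) atTop (nhds (ℓ - ℓ)) :=
        ((ht.comp (hshift ((m:ℤ)+1))).sub (ht.comp (hshift (m:ℤ))))
      rw [sub_self] at h1
      apply h1.congr'
      filter_upwards [eventually_ge_atTop (-(m:ℤ))] with k hk
      have h2 := hrec (k + m) (by omega)
      have h3 : k + (m:ℤ) - m = k := by ring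
      rw [h3] at h2
      have h4 : k + ((m:ℤ) + 1) = k + m + 1 := by ring
      rw [h4, h2]
      ring
    have hlogFp : Real.log (F p) = 0 := tendsto_nhds_unique hgF hg0
    have hFp1 : F p = 1 := by
      have := Real.exp_log (hFc p hp).1
      rw [hlogFp, Real.exp_zero] at this
      linarith
    have hpx : p = xbar := huniq p hp hFp1
    have hexp1 : Real.exp ℓ = 1 := by
      have : xbar * Real.exp ℓ = xbar * 1 := by rw [mul_one, ← hpdef, hpx]
      exact mul_left_cancel₀ (ne_of_gt hxb) this
    exact (Real.exp_eq_one_iff ℓ).mp hexp1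
  -- conclude
  have hb0 := core m b g K G L hKpos hGpos hL hrec hgK hgG hsign1 hsign2 hlip hlim hsmall
  have h1 : Tendsto (fun n : ℤ => xbar * Real.exp (b n)) atTop (nhds (xbar * Real.exp 0)) :=
    (Real.continuous_exp.continuousAt.tendsto.comp hb0).const_mul xbar
  rw [Real.exp_zero, mul_one] at h1
  exact h1.congr' (hAeq.mono fun n h => h.symm)
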